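/- Let θ : ℝ⁴ → ℝ be smooth with coordinates (w, z, x, y), set f := θ_{yz} + θ_{xw} + θ_{xy}² − θ_{xx}θ_{yy} and Q = ∂_w∂_x + ∂_z∂_y − θ_{yy}∂_x² − θ_{xx}∂_y² + 2θ_{xy}∂_x∂_y. Consider ℝ⁵ with coordinates (w, z, x, y, λ) and the vector fields X₁ = ∂_w − θ_{yy}∂_x + (θ_{xy} + λ)∂_y + f_y∂_λ and X₂ = ∂_z + (θ_{xy} − λ)∂_x − θ_{xx}∂_y − f_x∂_λ. Then X₁ and X₂ commute identically on ℝ⁵ if and only if θ satisfies the null-Kähler equation Q(f) = 0. -/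

import Mathlib

noncomputable section

/-- Partial derivative of `f` along the `i`-th coordinate direction on `ℝⁿ`.
Coordinates on `ℝ⁴` are `(w, z, x, y) = (0, 1, 2, 3)`; on `ℝ⁵` they are
`(w, z, x, y, λ) = (0, 1, 2, 3, 4)`. -/
def pd {n : ℕ} (i : Fin n) (f : (Fin n → ℝ) → ℝ) : (Fin n → ℝ) → ℝ :=
  fun x => fderiv ℝ f x (Pi.single i 1)

/-- Lie bracket of vector fields on `ℝⁿ`:
`[X,Y](p) = (DY)(p)(X(p)) − (DX)(p)(Y(p))`. -/
def lieBr {n : ℕ} (X Y : (Fin n → ℝ) → (Fin n → ℝ)) :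
    (Fin n → ℝ) → (Fin n → ℝ) :=
  fun p => fderiv ℝ Y p (X p) - fderiv ℝ X p (Y p)

/-- Projection `(w, z, x, y, λ) ↦ (w, z, x, y)`. -/
def π4 (s : Fin 5 → ℝ) : Fin 4 → ℝ := ![s 0, s 1, s 2, s 3]

/-- The operator `Q = ∂_w∂_x + ∂_z∂_y − θ_{yy}∂_x² − θ_{xx}∂_y² + 2θ_{xy}∂_x∂_y`
applied to `h`. -/
def Qth (θ h : (Fin 4 → ℝ) → ℝ) : (Fin 4 → ℝ) → ℝ :=
  fun x =>
    pd 0 (pd 2 h) x + pd 1 (pd 3 h) x - pd 3 (pd 3 θ) x * pd 2 (pd 2 h) x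
      - pd 2 (pd 2 θ) x * pd 3 (pd 3 h) x
      + 2 * pd 2 (pd 3 θ) x * pd 2 (pd 3 h) x

/-- The Plebański expression `f = θ_{yz} + θ_{xw} + θ_{xy}² − θ_{xx}θ_{yy}`. -/
def plebF (θ : (Fin 4 → ℝ) → ℝ) : (Fin 4 → ℝ) → ℝ :=
  fun x =>
    pd 1 (pd 3 θ) x + pd 0 (pd 2 θ) x + (pd 2 (pd 3 θ) x) ^ 2
      - pd 2 (pd 2 θ) x * pd 3 (pd 3 θ) x

/-- `X₁ = ∂_w − θ_{yy}∂_x + θ_{xy}∂_y + λ∂_y + f_y∂_λ`. -/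
def nkLax1 (θ : (Fin 4 → ℝ) → ℝ) : (Fin 5 → ℝ) → (Fin 5 → ℝ) :=
  fun s =>
    ![1, 0, -(pd 3 (pd 3 θ) (π4 s)), pd 2 (pd 3 θ) (π4 s) + s 4,
      pd 3 (plebF θ) (π4 s)]

/-- `X₂ = ∂_z + θ_{xy}∂_x − θ_{xx}∂_y − λ∂_x − f_x∂_λ`. -/
def nkLax2 (θ : (Fin 4 → ℝ) → ℝ) : (Fin 5 → ℝ) → (Fin 5 → ℝ) :=
  fun s =>
    ![0, 1, pd 2 (pd 3 θ) (π4 s) - s 4, -(pd 2 (pd 2 θ) (π4 s)),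
      -(pd 2 (plebF θ) (π4 s))]

lemma pd_contDiff {n : ℕ} (i : Fin n) {g : (Fin n → ℝ) → ℝ}
    (hg : ContDiff ℝ (⊤ : ℕ∞) g) : ContDiff ℝ (⊤ : ℕ∞) (pd i g) := by
  exact (hg.fderiv_right (m := (⊤:ℕ∞)) (by exact_mod_cast le_top)).clm_apply contDiff_const

lemma pd_comm {n : ℕ} (i j : Fin n) {g : (Fin n → ℝ) → ℝ}
    (hg : ContDiff ℝ (⊤ : ℕ∞) g) (x : Fin n → ℝ) :
    pd i (pd j g) x = pd j (pd i g) x := by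
  have hd : ∀ y, HasFDerivAt g (fderiv ℝ g y) y := fun y =>
    (hg.differentiable (by simp) y).hasFDerivAt
  have hfd : DifferentiableAt ℝ (fderiv ℝ g) x :=
    ((hg.fderiv_right (m := (⊤:ℕ∞)) (by exact_mod_cast le_top)).differentiable
      (by simp) x)
  have hsym := second_derivative_symmetric hd hfd.hasFDerivAt
    (Pi.single i 1) (Pi.single j 1)
  have e1 : ∀ (v : Fin n → ℝ), fderiv ℝ (fun y => fderiv ℝ g y v) x
      = (fderiv ℝ (fderiv ℝ g) x).flip v := by
    intro v
    have h := fderiv_clm_apply (𝕜 := ℝ) (c := fderiv ℝ g) (u := fun _ => v)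
      hfd (differentiableAt_const v)
    simpa using h
  show fderiv ℝ (fun y => fderiv ℝ g y (Pi.single j 1)) x (Pi.single i 1)
      = fderiv ℝ (fun y => fderiv ℝ g y (Pi.single i 1)) x (Pi.single j 1)
  rw [e1, e1]
  simpa using hsym

def πL : (Fin 5 → ℝ) →L[ℝ] (Fin 4 → ℝ) :=
  ContinuousLinearMap.pi fun j : Fin 4 => ContinuousLinearMap.proj (j.castSucc)

lemma π4_eq (s : Fin 5 → ℝ) : π4 s = πL s := by
  funext j; fin_cases j <;> rfl

lemma fderiv_apply_eq_sum {n : ℕ} {g : (Fin n → ℝ) → ℝ} {x : Fin n → ℝ}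
    (_hg : DifferentiableAt ℝ g x) (v : Fin n → ℝ) :
    fderiv ℝ g x v = ∑ i, v i * pd i g x := by
  have hv : v = ∑ i, v i • (Pi.single i 1 : Fin n → ℝ) := by
    funext j
    simp [Pi.single_apply, Finset.sum_apply]
  conv_lhs => rw [hv]
  rw [map_sum]
  refine Finset.sum_congr rfl fun i _ => ?_
  rw [map_smul]
  simp [pd, smul_eq_mul]

lemma diff_comp_pi4 {g : (Fin 4 → ℝ) → ℝ} (hg : Differentiable ℝ g) :
    Differentiable ℝ (fun s : Fin 5 → ℝ => g (π4 s)) := by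
  have h : (fun s : Fin 5 → ℝ => g (π4 s)) = g ∘ πL := by
    funext s; simp [Function.comp, π4_eq]
  rw [h]; exact hg.comp πL.differentiable

lemma fderiv_comp_pi4 {g : (Fin 4 → ℝ) → ℝ} {s : Fin 5 → ℝ}
    (hg : DifferentiableAt ℝ g (π4 s)) (v : Fin 5 → ℝ) :
    fderiv ℝ (fun q => g (π4 q)) s v = fderiv ℝ g (π4 s) (π4 v) := by
  have h : (fun q : Fin 5 → ℝ => g (π4 q)) = g ∘ πL := by
    funext q; simp [Function.comp, π4_eq]
  rw [h, fderiv_comp s (by rw [← π4_eq]; exact hg) πL.differentiableAt]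
  simp [πL.fderiv, π4_eq]

lemma fderiv_comp_pi4_expand {g : (Fin 4 → ℝ) → ℝ} {s : Fin 5 → ℝ}
    (hg : DifferentiableAt ℝ g (π4 s)) (v : Fin 5 → ℝ) :
    fderiv ℝ (fun q => g (π4 q)) s v =
      v 0 * pd 0 g (π4 s) + v 1 * pd 1 g (π4 s) + v 2 * pd 2 g (π4 s)
        + v 3 * pd 3 g (π4 s) := by
  rw [fderiv_comp_pi4 hg, fderiv_apply_eq_sum hg, Fin.sum_univ_four]
  rfl

lemma fderiv_pi_apply' {n : ℕ} {Y : (Fin n → ℝ) → (Fin n → ℝ)} {p : Fin n → ℝ}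
    (hY : DifferentiableAt ℝ Y p) (v : Fin n → ℝ) (i : Fin n) :
    fderiv ℝ Y p v i = fderiv ℝ (fun q => Y q i) p v := by
  have h : (fun q => Y q i)
      = (ContinuousLinearMap.proj i : (Fin n → ℝ) →L[ℝ] ℝ) ∘ Y := rfl
  rw [h, fderiv_comp p (ContinuousLinearMap.differentiableAt _) hY]
  simp

lemma cd_diff {n : ℕ} {g : (Fin n → ℝ) → ℝ} (h : ContDiff ℝ (⊤ : ℕ∞) g) :
    Differentiable ℝ g := h.differentiable (by simp)

lemma plebF_contDiff {θ : (Fin 4 → ℝ) → ℝ} (hθ : ContDiff ℝ (⊤ : ℕ∞) θ) :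
    ContDiff ℝ (⊤ : ℕ∞) (plebF θ) := by
  have h13 := pd_contDiff 1 (pd_contDiff 3 hθ)
  have h02 := pd_contDiff 0 (pd_contDiff 2 hθ)
  have h23 := pd_contDiff 2 (pd_contDiff 3 hθ)
  have h22 := pd_contDiff 2 (pd_contDiff 2 hθ)
  have h33 := pd_contDiff 3 (pd_contDiff 3 hθ)
  exact ((h13.add h02).add (h23.pow 2)).sub (h22.mul h33)

lemma pd_plebF {θ : (Fin 4 → ℝ) → ℝ} (hθ : ContDiff ℝ (⊤ : ℕ∞) θ)
    (j : Fin 4) (x : Fin 4 → ℝ) :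
    pd j (plebF θ) x =
      pd j (pd 1 (pd 3 θ)) x + pd j (pd 0 (pd 2 θ)) x
        + 2 * (pd 2 (pd 3 θ) x * pd j (pd 2 (pd 3 θ)) x)
        - (pd j (pd 2 (pd 2 θ)) x * pd 3 (pd 3 θ) x
           + pd 2 (pd 2 θ) x * pd j (pd 3 (pd 3 θ)) x) := by
  have d13 : DifferentiableAt ℝ (pd 1 (pd 3 θ)) x :=
    (cd_diff (pd_contDiff 1 (pd_contDiff 3 hθ))).differentiableAt
  have d02 : DifferentiableAt ℝ (pd 0 (pd 2 θ)) x :=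
    (cd_diff (pd_contDiff 0 (pd_contDiff 2 hθ))).differentiableAt
  have d23 : DifferentiableAt ℝ (pd 2 (pd 3 θ)) x :=
    (cd_diff (pd_contDiff 2 (pd_contDiff 3 hθ))).differentiableAt
  have d22 : DifferentiableAt ℝ (pd 2 (pd 2 θ)) x :=
    (cd_diff (pd_contDiff 2 (pd_contDiff 2 hθ))).differentiableAt
  have d33 : DifferentiableAt ℝ (pd 3 (pd 3 θ)) x :=
    (cd_diff (pd_contDiff 3 (pd_contDiff 3 hθ))).differentiableAt
  have hp : plebF θ = fun y => (pd 1 (pd 3 θ) y + pd 0 (pd 2 θ) y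
      + pd 2 (pd 3 θ) y * pd 2 (pd 3 θ) y) - pd 2 (pd 2 θ) y * pd 3 (pd 3 θ) y := by
    funext y; simp only [plebF]; ring
  show fderiv ℝ (plebF θ) x (Pi.single j 1) = _
  rw [hp, fderiv_fun_sub
      (f := fun y => pd 1 (pd 3 θ) y + pd 0 (pd 2 θ) y + pd 2 (pd 3 θ) y * pd 2 (pd 3 θ) y)
      (g := fun y => pd 2 (pd 2 θ) y * pd 3 (pd 3 θ) y)
      ((d13.add d02).add (d23.mul d23)) (d22.mul d33),
    fderiv_fun_add (f := fun y => pd 1 (pd 3 θ) y + pd 0 (pd 2 θ) y)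
      (g := fun y => pd 2 (pd 3 θ) y * pd 2 (pd 3 θ) y)
      (d13.add d02) (d23.mul d23), fderiv_fun_add d13 d02,
    fderiv_fun_mul d23 d23, fderiv_fun_mul d22 d33]
  simp only [ContinuousLinearMap.sub_apply, ContinuousLinearMap.add_apply,
    ContinuousLinearMap.smul_apply, smul_eq_mul, pd]
  ring

lemma coord4_diff : Differentiable ℝ (fun q : Fin 5 → ℝ => q 4) :=
  (ContinuousLinearMap.proj (R := ℝ) (φ := fun _ : Fin 5 => ℝ) 4).differentiable

lemma fderiv_coord4 (s v : Fin 5 → ℝ) :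
    fderiv ℝ (fun q : Fin 5 → ℝ => q 4) s v = v 4 := by
  have h : (fun q : Fin 5 → ℝ => q 4)
      = (ContinuousLinearMap.proj 4 : (Fin 5 → ℝ) →L[ℝ] ℝ) := rfl
  rw [h, ContinuousLinearMap.fderiv]; rfl

lemma bracket_formula (θ : (Fin 4 → ℝ) → ℝ) (hθ : ContDiff ℝ (⊤ : ℕ∞) θ) (s : Fin 5 → ℝ) :
    lieBr (nkLax1 θ) (nkLax2 θ) s = Pi.single 4 (-(Qth θ (plebF θ) (π4 s))) := by
  have hf := plebF_contDiff hθ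
  have D : ∀ i j : Fin 4, Differentiable ℝ (pd i (pd j θ)) := fun i j =>
    cd_diff (pd_contDiff i (pd_contDiff j hθ))
  have Df : ∀ i : Fin 4, Differentiable ℝ (pd i (plebF θ)) := fun i =>
    cd_diff (pd_contDiff i hf)
  have e23f : pd 3 (pd 2 θ) = pd 2 (pd 3 θ) := funext fun y => pd_comm 3 2 hθ y
  have hc1 : ∀ y, pd 3 (pd 0 (pd 2 θ)) y = pd 0 (pd 2 (pd 3 θ)) y := fun y => by
    rw [pd_comm 3 0 (pd_contDiff 2 hθ) y, e23f]
  have hc2 : ∀ y, pd 3 (pd 1 (pd 3 θ)) y = pd 1 (pd 3 (pd 3 θ)) y := fun y =>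
    pd_comm 3 1 (pd_contDiff 3 hθ) y
  have hc3 : ∀ y, pd 2 (pd 3 (pd 3 θ)) y = pd 3 (pd 2 (pd 3 θ)) y := fun y =>
    pd_comm 2 3 (pd_contDiff 3 hθ) y
  have hc4 : ∀ y, pd 3 (pd 2 (pd 2 θ)) y = pd 2 (pd 2 (pd 3 θ)) y := fun y => by
    rw [pd_comm 3 2 (pd_contDiff 2 hθ) y, e23f]
  have hc5 : ∀ y, pd 2 (pd 0 (pd 2 θ)) y = pd 0 (pd 2 (pd 2 θ)) y := fun y =>
    pd_comm 2 0 (pd_contDiff 2 hθ) y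
  have hc6 : ∀ y, pd 2 (pd 1 (pd 3 θ)) y = pd 1 (pd 2 (pd 3 θ)) y := fun y =>
    pd_comm 2 1 (pd_contDiff 3 hθ) y
  have hcf : ∀ y, pd 3 (pd 2 (plebF θ)) y = pd 2 (pd 3 (plebF θ)) y := fun y =>
    pd_comm 3 2 hf y
  have hd1 : Differentiable ℝ (nkLax1 θ) := by
    intro p
    rw [differentiableAt_pi]
    intro i
    fin_cases i
    · simp only [nkLax1, Matrix.cons_val_zero]
      exact differentiableAt_const _
    · simp only [nkLax1, Matrix.cons_val_one, Matrix.head_cons]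
      exact differentiableAt_const _
    · simp only [nkLax1, Matrix.cons_val_two, Matrix.vecHead, Matrix.vecTail,
        Function.comp_apply]
      exact ((diff_comp_pi4 (D 3 3)).neg) p
    · simp only [nkLax1, Matrix.cons_val_three, Matrix.vecHead, Matrix.vecTail,
        Function.comp_apply]
      exact ((diff_comp_pi4 (D 2 3)).add coord4_diff) p
    · simp only [nkLax1, Matrix.cons_val_four, Matrix.vecHead, Matrix.vecTail,
        Function.comp_apply]
      exact (diff_comp_pi4 (Df 3)) p
  have hd2 : Differentiable ℝ (nkLax2 θ) := by
    intro p
    rw [differentiableAt_pi]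
    intro i
    fin_cases i
    · simp only [nkLax2, Matrix.cons_val_zero]
      exact differentiableAt_const _
    · simp only [nkLax2, Matrix.cons_val_one, Matrix.head_cons]
      exact differentiableAt_const _
    · simp only [nkLax2, Matrix.cons_val_two, Matrix.vecHead, Matrix.vecTail,
        Function.comp_apply]
      exact ((diff_comp_pi4 (D 2 3)).sub coord4_diff) p
    · simp only [nkLax2, Matrix.cons_val_three, Matrix.vecHead, Matrix.vecTail,
        Function.comp_apply]
      exact ((diff_comp_pi4 (D 2 2)).neg) p
    · simp only [nkLax2, Matrix.cons_val_four, Matrix.vecHead, Matrix.vecTail,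
        Function.comp_apply]
      exact ((diff_comp_pi4 (Df 2)).neg) p
  funext i
  have L : lieBr (nkLax1 θ) (nkLax2 θ) s i =
      fderiv ℝ (fun q => nkLax2 θ q i) s (nkLax1 θ s)
        - fderiv ℝ (fun q => nkLax1 θ q i) s (nkLax2 θ s) := by
    simp only [lieBr, Pi.sub_apply]
    rw [fderiv_pi_apply' (hd2 s) _ i, fderiv_pi_apply' (hd1 s) _ i]
  rw [L]
  fin_cases i
  · -- i = 0
    have e1 : (fun q => nkLax2 θ q 0) = fun _ => (0:ℝ) := by
      funext q; simp [nkLax2]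
    have e2 : (fun q => nkLax1 θ q 0) = fun _ => (1:ℝ) := by
      funext q; simp [nkLax1]
    simp [e1, e2]
  · -- i = 1
    have e1 : (fun q => nkLax2 θ q 1) = fun _ => (1:ℝ) := by
      funext q; simp [nkLax2]
    have e2 : (fun q => nkLax1 θ q 1) = fun _ => (0:ℝ) := by
      funext q; simp [nkLax1]
    simp [e1, e2]
  · -- i = 2
    show fderiv ℝ (fun q => nkLax2 θ q 2) s (nkLax1 θ s) - fderiv ℝ (fun q => nkLax1 θ q 2) s (nkLax2 θ s) = (Pi.single 4 (-(Qth θ (plebF θ) (π4 s))) : Fin 5 → ℝ) 2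
    have e1 : (fun q => nkLax2 θ q 2) = fun q => pd 2 (pd 3 θ) (π4 q) - q 4 := by
      funext q; simp [nkLax2]
    have e2 : (fun q => nkLax1 θ q 2) = fun q => -(pd 3 (pd 3 θ) (π4 q)) := by
      funext q; simp [nkLax1]
    rw [e1, e2, fderiv_fun_sub ((diff_comp_pi4 (D 2 3)) s) (coord4_diff s), fderiv_fun_neg]
    simp only [ContinuousLinearMap.sub_apply, ContinuousLinearMap.neg_apply]
    rw [fderiv_comp_pi4_expand ((D 2 3) (π4 s)), fderiv_comp_pi4_expand ((D 3 3) (π4 s)),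
      fderiv_coord4]
    simp only [nkLax1, nkLax2, Matrix.cons_val_zero, Matrix.cons_val_one, Matrix.head_cons,
      Matrix.cons_val_two, Matrix.vecHead, Matrix.vecTail, Function.comp_apply,
      Matrix.cons_val_three, Matrix.cons_val_four, Matrix.cons_val_succ]
    rw [pd_plebF hθ 3, hc1 (π4 s), hc2 (π4 s), hc3 (π4 s), hc4 (π4 s)]
    have hz : (Pi.single 4 (-(Qth θ (plebF θ) (π4 s))) : Fin 5 → ℝ) 2 = 0 := by simp
    rw [hz]
    ring
  · -- i = 3
    show fderiv ℝ (fun q => nkLax2 θ q 3) s (nkLax1 θ s) - fderiv ℝ (fun q => nkLax1 θ q 3) s (nkLax2 θ s) = (Pi.single 4 (-(Qth θ (plebF θ) (π4 s))) : Fin 5 → ℝ) 3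
    have e1 : (fun q => nkLax2 θ q 3) = fun q => -(pd 2 (pd 2 θ) (π4 q)) := by
      funext q; simp [nkLax2]
    have e2 : (fun q => nkLax1 θ q 3) = fun q => pd 2 (pd 3 θ) (π4 q) + q 4 := by
      funext q; simp [nkLax1]
    rw [e1, e2, fderiv_fun_add ((diff_comp_pi4 (D 2 3)) s) (coord4_diff s), fderiv_fun_neg]
    simp only [ContinuousLinearMap.add_apply, ContinuousLinearMap.neg_apply]
    rw [fderiv_comp_pi4_expand ((D 2 2) (π4 s)), fderiv_comp_pi4_expand ((D 2 3) (π4 s)),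
      fderiv_coord4]
    simp only [nkLax1, nkLax2, Matrix.cons_val_zero, Matrix.cons_val_one, Matrix.head_cons,
      Matrix.cons_val_two, Matrix.vecHead, Matrix.vecTail, Function.comp_apply,
      Matrix.cons_val_three, Matrix.cons_val_four, Matrix.cons_val_succ]
    rw [pd_plebF hθ 2, hc3 (π4 s), hc4 (π4 s), hc5 (π4 s), hc6 (π4 s)]
    have hz : (Pi.single 4 (-(Qth θ (plebF θ) (π4 s))) : Fin 5 → ℝ) 3 = 0 := by simp
    rw [hz]
    ring
  · -- i = 4
    show fderiv ℝ (fun q => nkLax2 θ q 4) s (nkLax1 θ s) - fderiv ℝ (fun q => nkLax1 θ q 4) s (nkLax2 θ s) = (Pi.single 4 (-(Qth θ (plebF θ) (π4 s))) : Fin 5 → ℝ) 4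
    have e1 : (fun q => nkLax2 θ q 4) = fun q => -(pd 2 (plebF θ) (π4 q)) := by
      funext q; simp [nkLax2]
    have e2 : (fun q => nkLax1 θ q 4) = fun q => pd 3 (plebF θ) (π4 q) := by
      funext q; simp [nkLax1]
    rw [e1, e2, fderiv_fun_neg]
    simp only [ContinuousLinearMap.neg_apply]
    rw [fderiv_comp_pi4_expand ((Df 2) (π4 s)), fderiv_comp_pi4_expand ((Df 3) (π4 s))]
    simp only [nkLax1, nkLax2, Matrix.cons_val_zero, Matrix.cons_val_one, Matrix.head_cons,
      Matrix.cons_val_two, Matrix.vecHead, Matrix.vecTail, Function.comp_apply,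
      Matrix.cons_val_three, Matrix.cons_val_four, Matrix.cons_val_succ]
    have hz : (Pi.single 4 (-(Qth θ (plebF θ) (π4 s))) : Fin 5 → ℝ) 4
        = -(Qth θ (plebF θ) (π4 s)) := by simp
    rw [hz, hcf (π4 s)]
    simp only [Qth]
    ring


/-- For smooth `θ`, the Lax fields `X₁, X₂` commute identically on `ℝ⁵` iff `θ`
solves the null-Kähler equation `Q(f) = 0`. -/
theorem null_kahler_lax_commute_iff
    (θ : (Fin 4 → ℝ) → ℝ)
    (hθ : ContDiff ℝ (⊤ : ℕ∞) θ) :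
    (∀ s : Fin 5 → ℝ, lieBr (nkLax1 θ) (nkLax2 θ) s = 0) ↔
      (∀ x : Fin 4 → ℝ, Qth θ (plebF θ) x = 0) := by
  constructor
  · intro h x
    have hb := bracket_formula θ hθ (Fin.snoc x 0)
    rw [h (Fin.snoc x 0)] at hb
    have hπ : π4 (Fin.snoc x 0) = x := by
      funext j; fin_cases j <;> (simp [π4, Fin.snoc] <;> rfl)
    rw [hπ] at hb
    have h4 := congrFun hb 4
    simpa using h4.symm
  · intro h s
    rw [bracket_formula θ hθ s, h (π4 s)]
    simp
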